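/- Let V ∈ ℝ^{p×q}, b ∈ ℝ^p, and let Y be a finite set with encodings ψ: Y → ℝ^p. Define ŷ_L(u) ∈ argmin_{y ∈ Y} ⟨ψ(y), Vu + b⟩, and σ = max_{y ∈ Y} ‖Vᵀψ(y)‖₂. Then for any u, μ ∈ ℝ^q: ⟨ψ(ŷ_L(u)) − ψ(ŷ_L(μ)), Vμ + b⟩ ≤ 2σ‖μ − u‖₂. -/
import Mathlib

open Matrix

private lemma cs_sqrt {n : ℕ} (f g : Fin n → ℝ) :
    ∑ i, f i * g i ≤ Real.sqrt (∑ i, f i ^ 2) * Real.sqrt (∑ i, g i ^ 2) := by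
  have h := Finset.sum_mul_sq_le_sq_mul_sq Finset.univ f g
  have h1 : |∑ i, f i * g i| ≤ Real.sqrt ((∑ i, f i ^ 2) * ∑ i, g i ^ 2) := by
    rw [← Real.sqrt_sq_eq_abs]
    exact Real.sqrt_le_sqrt h
  calc ∑ i, f i * g i ≤ |∑ i, f i * g i| := le_abs_self _
    _ ≤ _ := by
        rw [Real.sqrt_mul (by positivity)] at h1; exact h1

/-- Decoding-stability lemma: if `ŷ_L(u)` and `ŷ_L(μ)` are calibrated
decodings (minimizers of `y ↦ ⟨ψ(y), V·+b⟩`) at `u` and `μ`, and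
`σ` bounds `‖Vᵀψ(y)‖₂` for all `y`, then
`⟨ψ(ŷ_L(u)) − ψ(ŷ_L(μ)), Vμ + b⟩ ≤ 2σ‖μ − u‖₂`. -/
theorem calibrated_decoding_stability
    (p q : ℕ) (Y : Type*) [Fintype Y] [Nonempty Y]
    (V : Matrix (Fin p) (Fin q) ℝ) (b : Fin p → ℝ) (ψ : Y → Fin p → ℝ)
    (σ : ℝ)
    (hσ : ∀ y : Y, Real.sqrt (∑ j, (V.transpose.mulVec (ψ y) j) ^ 2) ≤ σ)
    (u μ : Fin q → ℝ) (yu yμ : Y)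
    (hyu : ∀ y : Y, ∑ i, ψ yu i * (V.mulVec u i + b i)
                    ≤ ∑ i, ψ y i * (V.mulVec u i + b i))
    (hyμ : ∀ y : Y, ∑ i, ψ yμ i * (V.mulVec μ i + b i)
                    ≤ ∑ i, ψ y i * (V.mulVec μ i + b i)) :
    ∑ i, (ψ yu i - ψ yμ i) * (V.mulVec μ i + b i)
      ≤ 2 * σ * Real.sqrt (∑ j, (μ j - u j) ^ 2) := by
  set d : Fin q → ℝ := fun j => μ j - u j with hd
  have hnn : (0:ℝ) ≤ Real.sqrt (∑ j, d j ^ 2) := Real.sqrt_nonneg _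
  -- key identity: ⟨ψ y, V μ⟩ - ⟨ψ y, V u⟩ = ⟨Vᵀ ψ y, d⟩
  have key : ∀ y : Y, (∑ i, ψ y i * V.mulVec μ i) - (∑ i, ψ y i * V.mulVec u i)
      = ∑ j, V.transpose.mulVec (ψ y) j * d j := by
    intro y
    have hμ : ∀ i, V.mulVec μ i = V.mulVec u i + V.mulVec d i := by
      intro i
      simp [mulVec, dotProduct, hd, mul_sub, Finset.sum_sub_distrib]
    have : (∑ i, ψ y i * V.mulVec μ i) - (∑ i, ψ y i * V.mulVec u i)
        = ∑ i, ψ y i * V.mulVec d i := by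
      rw [← Finset.sum_sub_distrib]
      congr 1; ext i; rw [hμ i]; ring
    rw [this]
    -- ψ y ⬝ᵥ V *ᵥ d = Vᵀ *ᵥ ψ y ⬝ᵥ d
    have := Matrix.dotProduct_mulVec (ψ y) V d
    simpa [dotProduct, Matrix.mulVec, Matrix.transpose, Matrix.vecMul, mul_comm] using this
  have bound : ∀ y : Y, ∑ j, V.transpose.mulVec (ψ y) j * d j
      ≤ σ * Real.sqrt (∑ j, d j ^ 2) := by
    intro y
    calc ∑ j, V.transpose.mulVec (ψ y) j * d j
        ≤ Real.sqrt (∑ j, (V.transpose.mulVec (ψ y) j) ^ 2) * Real.sqrt (∑ j, d j ^ 2) :=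
          cs_sqrt _ _
      _ ≤ σ * Real.sqrt (∑ j, d j ^ 2) := mul_le_mul_of_nonneg_right (hσ y) hnn
  have bound' : ∀ y : Y, ∑ j, V.transpose.mulVec (ψ y) j * (-d j)
      ≤ σ * Real.sqrt (∑ j, d j ^ 2) := by
    intro y
    calc ∑ j, V.transpose.mulVec (ψ y) j * (-d j)
        ≤ Real.sqrt (∑ j, (V.transpose.mulVec (ψ y) j) ^ 2) * Real.sqrt (∑ j, (-d j) ^ 2) :=
          cs_sqrt _ _
      _ ≤ σ * Real.sqrt (∑ j, d j ^ 2) := by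
          have hs : ∑ j, (-d j) ^ 2 = ∑ j, d j ^ 2 := by
            apply Finset.sum_congr rfl; intro j _; ring
          rw [hs]
          exact mul_le_mul_of_nonneg_right (hσ y) hnn
  have h1 : ∑ i, ψ yu i * (V.mulVec μ i + b i)
      ≤ (∑ i, ψ yu i * (V.mulVec u i + b i)) + σ * Real.sqrt (∑ j, d j ^ 2) := by
    have := bound yu
    have e : ∑ i, ψ yu i * (V.mulVec μ i + b i) - ∑ i, ψ yu i * (V.mulVec u i + b i)
        = ∑ j, V.transpose.mulVec (ψ yu) j * d j := by
      rw [← key yu, ← Finset.sum_sub_distrib, ← Finset.sum_sub_distrib]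
      apply Finset.sum_congr rfl; intro i _; ring
    linarith [e ▸ this]
  have h2 : ∑ i, ψ yu i * (V.mulVec u i + b i) ≤ ∑ i, ψ yμ i * (V.mulVec u i + b i) := hyu yμ
  have h3 : ∑ i, ψ yμ i * (V.mulVec u i + b i)
      ≤ (∑ i, ψ yμ i * (V.mulVec μ i + b i)) + σ * Real.sqrt (∑ j, d j ^ 2) := by
    have := bound' yμ
    have e : ∑ i, ψ yμ i * (V.mulVec u i + b i) - ∑ i, ψ yμ i * (V.mulVec μ i + b i)
        = ∑ j, V.transpose.mulVec (ψ yμ) j * (-d j) := by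
      have hk := key yμ
      have : ∑ j, V.transpose.mulVec (ψ yμ) j * (-d j)
          = -(∑ j, V.transpose.mulVec (ψ yμ) j * d j) := by
        simp [mul_neg]
      rw [this, ← hk, neg_sub, ← Finset.sum_sub_distrib, ← Finset.sum_sub_distrib]
      apply Finset.sum_congr rfl; intro i _; ring
    linarith [e ▸ this]
  have final : ∑ i, (ψ yu i - ψ yμ i) * (V.mulVec μ i + b i)
      = (∑ i, ψ yu i * (V.mulVec μ i + b i)) - ∑ i, ψ yμ i * (V.mulVec μ i + b i) := by
    rw [← Finset.sum_sub_distrib]; congr 1; ext i; ring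
  rw [final]
  linarith
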